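/- arXiv:1310.3048 — 2 statements merged into one kernel-verified Lean document; each statement's English description precedes it below -/
import Mathlib

section
/- Let M be a graded abelian group with differential d (d² = 0) and a decreasing filtration F^pM preserved by d, with associated spectral sequence (E^p_r, d_r). For an integer l, let E(l)^p_r denote the spectral sequence of the quotient filtered complex M/F^lM and π : M → M/F^lM the projection. If p < l, then the induced map π : E^p_r → E(l)^p_r is injective. -/
/-!
Spectral sequence of a filtered differential abelian group `M`:
`Z^p_r = {x ∈ F^pM ∣ dx ∈ F^{p+r}M}`, `E^p_r = Z^p_r/(Z^{p+1}_{r-1} + d Z^{p-r+1}_{r-1})`.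
We formalize the injectivity of the map induced on `E^p_r` by the projection
`π : M → M/F^lM` (for `p < l`) at the level of elements: if `x ∈ Z^p_r` and `π x` lies in
the "boundary" subgroup of the quotient spectral sequence, then `x` lies in the
boundary subgroup of the spectral sequence of `M`.
-/

/-- The cycles `Z^p_r = {x ∈ F^pM ∣ dx ∈ F^{p+r}M}` of a filtered differential group. -/
def specZ {M : Type*} [AddCommGroup M] (d : M →+ M) (F : ℤ → AddSubgroup M)
    (p r : ℤ) : AddSubgroup M :=
  F p ⊓ (F (p + r)).comap d

/-- The boundary subgroup `Z^{p+1}_{r-1} + d Z^{p-r+1}_{r-1}`, the denominator of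
`E^p_r = Z^p_r/(Z^{p+1}_{r-1} + d Z^{p-r+1}_{r-1})`. -/
def specB {M : Type*} [AddCommGroup M] (d : M →+ M) (F : ℤ → AddSubgroup M)
    (p r : ℤ) : AddSubgroup M :=
  specZ d F (p + 1) (r - 1) ⊔ (specZ d F (p - r + 1) (r - 1)).map d

/-- The induced filtration on the quotient `M/F^lM`. -/
def quotF {M : Type*} [AddCommGroup M] (F : ℤ → AddSubgroup M) (l p : ℤ) :
    AddSubgroup (M ⧸ F l) :=
  (F p).map (QuotientAddGroup.mk' (F l))

/-- The induced differential on the quotient `M/F^lM`. -/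
def quotD {M : Type*} [AddCommGroup M] (d : M →+ M) (F : ℤ → AddSubgroup M) (l : ℤ)
    (hdF : ∀ p, ∀ x ∈ F p, d x ∈ F p) : (M ⧸ F l) →+ (M ⧸ F l) :=
  QuotientAddGroup.map (F l) (F l) d (fun x hx => hdF l x hx)

/-- If `p < l`, the map `π : E^p_r → E(l)^p_r` induced by the projection
`π : M → M/F^lM` is injective: any `x ∈ Z^p_r` whose image lies in the boundary subgroup
of the quotient spectral sequence already lies in the boundary subgroup for `M`. -/
theorem stmt_0 {M : Type*} [AddCommGroup M] (d : M →+ M) (hd : ∀ x, d (d x) = 0)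
    (F : ℤ → AddSubgroup M) (hF : ∀ p q : ℤ, p ≤ q → F q ≤ F p)
    (hdF : ∀ p, ∀ x ∈ F p, d x ∈ F p)
    (l p r : ℤ) (hr : 0 ≤ r) (hpl : p < l)
    (x : M) (hx : x ∈ specZ d F p r)
    (hπx : QuotientAddGroup.mk' (F l) x ∈ specB (quotD d F l hdF) (quotF F l) p r) :
    x ∈ specB d F p r := by
  obtain ⟨hxF, hxd⟩ := hx
  rw [specB, AddSubgroup.mem_sup] at hπx
  obtain ⟨yb, hyb, wb, hwb, hsum⟩ := hπx
  obtain ⟨zb, hzb, rfl⟩ := AddSubgroup.mem_map.mp hwb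
  obtain ⟨y, hy, rfl⟩ := AddSubgroup.mem_map.mp hyb.1
  obtain ⟨z, hz, rfl⟩ := AddSubgroup.mem_map.mp hzb.1
  have hdz' : quotD d F l hdF (QuotientAddGroup.mk' (F l) z)
      = QuotientAddGroup.mk' (F l) (d z) := rfl
  -- `d z ∈ F p`
  have hdzp : d z ∈ F p := by
    have h2 : quotD d F l hdF (QuotientAddGroup.mk' (F l) z)
        ∈ quotF F l (p - r + 1 + (r - 1)) := hzb.2
    rw [hdz'] at h2
    obtain ⟨v, hv, hv2⟩ := AddSubgroup.mem_map.mp h2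
    have hsub : v - d z ∈ F l := by
      rw [QuotientAddGroup.mk'_apply, QuotientAddGroup.mk'_apply] at hv2
      exact (QuotientAddGroup.eq_iff_sub_mem).mp hv2
    have hvp : v ∈ F (p - r + 1 + (r - 1)) := hv
    have he : p - r + 1 + (r - 1) = p := by ring
    rw [he] at hvp
    have hrw : d z = v - (v - d z) := by abel
    rw [hrw]
    exact sub_mem hvp (hF p l hpl.le hsub)
  -- `u := x - (y + d z) ∈ F l`
  have hu : x - (y + d z) ∈ F l := by
    have hmk : QuotientAddGroup.mk' (F l) x = QuotientAddGroup.mk' (F l) (y + d z) := by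
      rw [map_add, ← hdz', hsum]
    rw [QuotientAddGroup.mk'_apply, QuotientAddGroup.mk'_apply] at hmk
    exact (QuotientAddGroup.eq_iff_sub_mem).mp hmk
  rw [specB, AddSubgroup.mem_sup]
  refine ⟨y + (x - (y + d z)), ⟨?_, ?_⟩, d z,
    AddSubgroup.mem_map_of_mem d ⟨hz, ?_⟩, by abel⟩
  · exact add_mem hy (hF (p + 1) l hpl (hu))
  · show d (y + (x - (y + d z))) ∈ F (p + 1 + (r - 1))
    have he : p + 1 + (r - 1) = p + r := by ring
    have hrw : y + (x - (y + d z)) = x - d z := by abel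
    rw [he, hrw, map_sub, hd z, sub_zero]
    exact hxd
  · show d z ∈ F (p - r + 1 + (r - 1))
    have he : p - r + 1 + (r - 1) = p := by ring
    rw [he]
    exact hdzp
end

section
/- Let M be a graded abelian group with differential d and decreasing filtration F^pM preserved by d, with spectral sequence (E^p_r, d_r). For an integer l, let E(l)^p_r be the spectral sequence of the quotient M/F^lM and π the projection. If p + r ≤ l, then π : E^p_r → E(l)^p_r is surjective (in fact an isomorphism when moreover p < l). -/
/-- If `p + r ≤ l`, then `π : E^p_r → E(l)^p_r` is surjective: every
cycle `y ∈ Z(l)^p_r` agrees, modulo the boundary subgroup of the quotient spectral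
sequence, with the image of a cycle of `M`.  If moreover `p < l`, it is an isomorphism
(also injective). -/
theorem stmt_1 {M : Type*} [AddCommGroup M] (d : M →+ M) (hd : ∀ x, d (d x) = 0)
    (F : ℤ → AddSubgroup M) (hF : ∀ p q : ℤ, p ≤ q → F q ≤ F p)
    (hdF : ∀ p, ∀ x ∈ F p, d x ∈ F p)
    (l p r : ℤ) (hr : 0 ≤ r) (hpr : p + r ≤ l) :
    (∀ y ∈ specZ (quotD d F l hdF) (quotF F l) p r,
        ∃ x ∈ specZ d F p r,
          QuotientAddGroup.mk' (F l) x - y ∈ specB (quotD d F l hdF) (quotF F l) p r) ∧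
    (p < l → ∀ x ∈ specZ d F p r,
        QuotientAddGroup.mk' (F l) x ∈ specB (quotD d F l hdF) (quotF F l) p r →
          x ∈ specB d F p r) := by
  have hmap : ∀ x : M, quotD d F l hdF (QuotientAddGroup.mk' (F l) x)
      = QuotientAddGroup.mk' (F l) (d x) := fun x => rfl
  have heq : ∀ a b : M, QuotientAddGroup.mk' (F l) a = QuotientAddGroup.mk' (F l) b
      ↔ a - b ∈ F l := by
    intro a b
    rw [QuotientAddGroup.mk'_eq_mk']
    constructor
    · rintro ⟨z, hz, h⟩
      have : a - b = -z := by rw [← h]; abel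
      rw [this]; exact neg_mem hz
    · intro h
      exact ⟨-(a - b), neg_mem h, by abel⟩
  constructor
  · intro y hy
    rw [specZ, AddSubgroup.mem_inf] at hy
    obtain ⟨hy1, hy2⟩ := hy
    obtain ⟨x, hx, rfl⟩ := hy1
    rw [AddSubgroup.mem_comap, hmap] at hy2
    obtain ⟨z, hz, hzx⟩ := hy2
    have hsub : z - d x ∈ F l := (heq _ _).1 hzx
    have hdx : d x ∈ F (p + r) := by
      have : d x = z - (z - d x) := by abel
      rw [this]
      exact sub_mem hz (hF _ _ hpr hsub)
    exact ⟨x, ⟨hx, hdx⟩, by simpa using zero_mem _⟩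
  · intro hpl x hx hmem
    rw [specZ, AddSubgroup.mem_inf, AddSubgroup.mem_comap] at hx
    obtain ⟨hx1, hx2⟩ := hx
    rw [specB, AddSubgroup.mem_sup] at hmem
    obtain ⟨a, ha, c, hc, hac⟩ := hmem
    obtain ⟨b, hb, rfl⟩ := hc
    rw [specZ, AddSubgroup.mem_inf] at ha
    rw [specZ, SetLike.mem_coe, AddSubgroup.mem_inf] at hb
    obtain ⟨ha1, ha2⟩ := ha
    obtain ⟨hb1, hb2⟩ := hb
    obtain ⟨a', ha', rfl⟩ := ha1
    obtain ⟨b', hb', rfl⟩ := hb1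
    rw [AddSubgroup.mem_comap, hmap] at ha2 hb2
    -- d a' ∈ F (p + r)
    obtain ⟨za, hza, hzaeq⟩ := ha2
    have hda' : d a' ∈ F (p + r) := by
      have h1 : za - d a' ∈ F l := (heq _ _).1 hzaeq
      have e : p + 1 + (r - 1) = p + r := by ring
      rw [e] at hza
      have : d a' = za - (za - d a') := by abel
      rw [this]
      exact sub_mem hza (hF _ _ hpr h1)
    -- d b' ∈ F p
    obtain ⟨zb, hzb, hzbeq⟩ := hb2
    have hdb' : d b' ∈ F p := by
      have h1 : zb - d b' ∈ F l := (heq _ _).1 hzbeq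
      have h2 : zb ∈ F p := by
        have : p - r + 1 + (r - 1) = p := by ring
        rwa [this] at hzb
      have : d b' = zb - (zb - d b') := by abel
      rw [this]
      exact sub_mem h2 (hF _ _ hpl.le h1)
    -- x - a' - d b' ∈ F l
    rw [hmap] at hac
    have hu : x - (a' + d b') ∈ F l := by
      rw [← heq]
      rw [← hac]
      rfl
    set u := x - (a' + d b') with hudef
    have hflp1 : F l ≤ F (p + 1) := hF _ _ (by omega)
    have hflpr : F l ≤ F (p + r) := hF _ _ hpr
    rw [specB, AddSubgroup.mem_sup]
    have hmemA : a' + u ∈ specZ d F (p + 1) (r - 1) := by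
      rw [specZ, AddSubgroup.mem_inf, AddSubgroup.mem_comap]
      have e : p + 1 + (r - 1) = p + r := by ring
      rw [e]
      exact ⟨add_mem ha' (hflp1 hu), by
        rw [map_add]; exact add_mem hda' (hflpr (hdF l u hu))⟩
    have hmemB : b' ∈ specZ d F (p - r + 1) (r - 1) := by
      rw [specZ, AddSubgroup.mem_inf, AddSubgroup.mem_comap]
      have e : p - r + 1 + (r - 1) = p := by ring
      rw [e]
      exact ⟨hb', hdb'⟩
    exact ⟨a' + u, hmemA, d b', ⟨b', hmemB, rfl⟩, by rw [hudef]; abel⟩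
end
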